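/- For j ∈ {0, 1}, let F_j : ℝ → ℝ be nondecreasing and right-continuous and satisfy the second-order Pareto tail condition with parameters (α_j, ρ_j, c_j, d_j), and define Q_j(q) = inf{ y ∈ ℝ : F_j(y) ≥ q } for q ∈ (0, 1). Let (t_{1,n}), (t_{0,n}) be sequences of reals tending to ∞ and (q_n) a sequence in (0,1) with q_n → 1. Define the extrapolated quantiles Ŷ_{j,n} = t_{j,n} · ( (1 − F_j(t_{j,n})) / (1 − q_n) )^(1/α_j) and the quantile treatment effect QTE(q) = Q_1(q) − Q_0(q). Then ( Ŷ_{1,n} − Ŷ_{0,n} − QTE(q_n) ) / max(Q_1(q_n), Q_0(q_n)) → 0 as n → ∞; that is, the Pareto-extrapolated quantile treatment effect approximates the true quantile treatment effect with error negligible relative to the magnitude of the larger quantile. -/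

import Mathlib

open Filter MeasureTheory Real Set

/-- Second-order Pareto tail condition with parameters `(α, ρ, c, d)`. -/
def ParetoTail (F : ℝ → ℝ) (α ρ c d : ℝ) : Prop :=
  0 < α ∧ 0 < ρ ∧ 0 < c ∧
  ∃ y₀ : ℝ, 0 < y₀ ∧ ∃ e : ℝ → ℝ,
    Tendsto (fun y : ℝ => y ^ ρ * e y) atTop (nhds 0) ∧
    ∀ y : ℝ, y₀ ≤ y → 1 - F y = c * y ^ (-α) * (1 + d * y ^ (-ρ) + e y)

section aux

variable {F : ℝ → ℝ} {α ρ c d : ℝ}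

/-- the correction factor tends to 1 -/
lemma pareto_G_tendsto (hρ : 0 < ρ) (e : ℝ → ℝ)
    (he : Tendsto (fun y : ℝ => y ^ ρ * e y) atTop (nhds 0)) :
    Tendsto (fun y : ℝ => 1 + d * y ^ (-ρ) + e y) atTop (nhds 1) := by
  have he0 : Tendsto e atTop (nhds 0) := by
    have h1 : Tendsto (fun y : ℝ => y ^ (-ρ) * (y ^ ρ * e y)) atTop (nhds 0) := by
      simpa using (tendsto_rpow_neg_atTop hρ).mul he
    apply h1.congr'
    filter_upwards [eventually_gt_atTop (0:ℝ)] with y hy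
    rw [← mul_assoc, Real.rpow_neg hy.le,
      inv_mul_cancel₀ (ne_of_gt (Real.rpow_pos_of_pos hy ρ)), one_mul]
  have hd : Tendsto (fun y : ℝ => d * y ^ (-ρ)) atTop (nhds 0) := by
    simpa using (tendsto_rpow_neg_atTop hρ).const_mul d
  simpa using (tendsto_const_nhds.add hd).add he0

lemma s_tendsto_atTop (hα : 0 < α) (hc : 0 < c) (q : ℕ → ℝ)
    (hq : ∀ n : ℕ, q n ∈ Set.Ioo (0 : ℝ) 1) (hq1 : Tendsto q atTop (nhds 1)) :
    Tendsto (fun n => (c / (1 - q n)) ^ (1/α)) atTop atTop := by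
  have h0 : Tendsto (fun n => 1 - q n) atTop (nhdsWithin 0 (Set.Ioi 0)) := by
    rw [tendsto_nhdsWithin_iff]
    constructor
    · simpa using (tendsto_const_nhds (x := (1:ℝ))).sub hq1
    · exact Eventually.of_forall fun n => sub_pos.2 (hq n).2
  have h1 : Tendsto (fun n => c / (1 - q n)) atTop atTop := by
    have := tendsto_inv_nhdsGT_zero.comp h0
    simpa [div_eq_mul_inv] using this.const_mul_atTop hc
  exact (tendsto_rpow_atTop (by positivity : (0:ℝ) < 1/α)).comp h1

end aux

section main

/-- Two-sided eventual bound on the quantile. -/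
lemma quantile_bounds (F : ℝ → ℝ) (α ρ c d : ℝ) (hF : ParetoTail F α ρ c d)
    (hmono : Monotone F) (q : ℕ → ℝ) (hq : ∀ n : ℕ, q n ∈ Set.Ioo (0 : ℝ) 1)
    (hq1 : Tendsto q atTop (nhds 1)) {ε : ℝ} (hε : 0 < ε) (hε1 : ε < 1) :
    ∀ᶠ n in atTop, (1 - ε) * (c / (1 - q n)) ^ (1/α) ≤ sInf {y : ℝ | q n ≤ F y} ∧
      sInf {y : ℝ | q n ≤ F y} ≤ (1 + ε) * (c / (1 - q n)) ^ (1/α) := by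
  obtain ⟨hα, hρ, hc, y₀, hy₀, e, he, hFeq⟩ := hF
  have hG := pareto_G_tendsto (d := d) hρ e he
  set G : ℝ → ℝ := fun y => 1 + d * y ^ (-ρ) + e y with hGdef
  set δ : ℝ := min (1 - (1-ε)^α) ((1+ε)^α - 1) with hδdef
  have hP1 : (1-ε)^α < 1 := Real.rpow_lt_one (by linarith) (by linarith) hα
  have hP1' : (0:ℝ) < (1-ε)^α := Real.rpow_pos_of_pos (by linarith) α
  have hP2 : 1 < (1+ε)^α :=
    (Real.one_lt_rpow_iff_of_pos (by linarith)).2 (Or.inl ⟨by linarith, hα⟩)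
  have hδpos : 0 < δ := lt_min (by linarith) (by linarith)
  have hδa : δ ≤ 1 - (1-ε)^α := min_le_left _ _
  have hδb : δ ≤ (1+ε)^α - 1 := min_le_right _ _
  have hδ1 : δ < 1 := by linarith
  -- threshold Y
  have h1 : ∀ᶠ y in atTop, |G y - 1| < δ := by
    have := Metric.tendsto_nhds.1 hG δ hδpos
    simpa [Real.dist_eq] using this
  obtain ⟨Y, hY⟩ := (h1.and (eventually_ge_atTop (max y₀ 1))).exists_forall_of_atTop
  have hstop := s_tendsto_atTop hα hc q hq hq1
  filter_upwards [hstop.eventually_gt_atTop (Y / (1 - ε)),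
    hstop.eventually_gt_atTop 0] with n hn hs0
  set s : ℝ := (c / (1 - q n)) ^ (1/α) with hsdef
  have h1q : 0 < 1 - q n := sub_pos.2 (hq n).2
  have hYb : Y < (1 - ε) * s := by
    rw [div_lt_iff₀ (by linarith)] at hn; linarith [hn]
  have hsα : s ^ (-α) = (1 - q n) / c := by
    rw [hsdef, ← Real.rpow_mul (le_of_lt (div_pos hc h1q)),
      show 1/α * (-α) = -1 by field_simp, Real.rpow_neg_one, inv_div]
  have hspos : 0 < s := hs0
  set b : ℝ := (1 - ε) * s with hbdef
  have hbpos : 0 < b := mul_pos (by linarith) hspos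
  -- lower bound: every element of the set is ≥ b
  have hsub : ∀ y', Y ≤ y' → y' < b → F y' < q n := by
    intro y' hy1 hy2
    obtain ⟨hGy, hy'big⟩ := hY y' hy1
    have hy'pos : 0 < y' := lt_of_lt_of_le (by norm_num) (le_trans (le_max_right y₀ 1) hy'big)
    have heq : 1 - F y' = c * y' ^ (-α) * G y' := hFeq y' (le_trans (le_max_left y₀ 1) hy'big)
    have h3 : b ^ (-α) < y' ^ (-α) :=
      Real.rpow_lt_rpow_of_neg hy'pos hy2 (neg_lt_zero.2 hα)
    have hba : b ^ (-α) = (1-ε) ^ (-α) * s ^ (-α) :=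
      Real.mul_rpow (by linarith) hspos.le
    have hGlb : 1 - δ < G y' := by have := abs_lt.1 hGy; linarith [this.1]
    have hy'α : 0 < y' ^ (-α) := Real.rpow_pos_of_pos hy'pos _
    have e1 : c * y' ^ (-α) * (1 - δ) ≤ c * y' ^ (-α) * G y' :=
      mul_le_mul_of_nonneg_left hGlb.le (by positivity)
    have e2 : c * b ^ (-α) * (1 - δ) < c * y' ^ (-α) * (1 - δ) :=
      mul_lt_mul_of_pos_right (mul_lt_mul_of_pos_left h3 hc) (by linarith)
    have e3 : 1 - q n ≤ c * b ^ (-α) * (1 - δ) := by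
      rw [hba, hsα, Real.rpow_neg (by linarith : (0:ℝ) ≤ 1 - ε)]
      have key : (1:ℝ) ≤ (1-δ)/(1-ε)^α := (one_le_div hP1').2 (by linarith)
      calc 1 - q n = (1 - q n) * 1 := (mul_one _).symm
        _ ≤ (1 - q n) * ((1-δ)/(1-ε)^α) := mul_le_mul_of_nonneg_left key h1q.le
        _ = c * (((1-ε)^α)⁻¹ * ((1 - q n)/c)) * (1-δ) := by field_simp
    have : 1 - q n < 1 - F y' := by rw [heq]; linarith
    linarith
  have hlow : ∀ y ∈ {y : ℝ | q n ≤ F y}, b ≤ y := by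
    intro y hy
    by_contra hlt
    push_neg at hlt
    rcases le_or_gt Y y with h | h
    · exact absurd hy (not_le.2 (hsub y h hlt))
    · have hFY : F Y < q n := hsub Y le_rfl hYb
      have : F y ≤ F Y := hmono h.le
      exact absurd hy (not_le.2 (lt_of_le_of_lt this hFY))
  -- upper bound: (1+ε) s is in the set
  have humem : q n ≤ F ((1 + ε) * s) := by
    set u : ℝ := (1 + ε) * s with hudef
    have hub : b < u := by
      have : (1 - ε) * s < (1 + ε) * s := by nlinarith
      simpa [hbdef, hudef] using this
    have huY : Y ≤ u := le_of_lt (lt_of_lt_of_le hYb hub.le)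
    obtain ⟨hGu, hubig⟩ := hY u huY
    have hupos : 0 < u := mul_pos (by linarith) hspos
    have heq : 1 - F u = c * u ^ (-α) * G u := hFeq u (le_trans (le_max_left y₀ 1) hubig)
    have hGub : G u < 1 + δ := by have := abs_lt.1 hGu; linarith [this.2]
    have huα : u ^ (-α) = (1+ε) ^ (-α) * s ^ (-α) :=
      Real.mul_rpow (by linarith) hspos.le
    have huαpos : 0 < u ^ (-α) := Real.rpow_pos_of_pos hupos _
    have e4 : 1 - F u ≤ c * u ^ (-α) * (1 + δ) := by
      rw [heq]; exact mul_le_mul_of_nonneg_left hGub.le (by positivity)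
    have e5 : c * u ^ (-α) * (1 + δ) ≤ 1 - q n := by
      rw [huα, hsα, Real.rpow_neg (by linarith : (0:ℝ) ≤ 1 + ε)]
      have key : (1+δ)/(1+ε)^α ≤ 1 := (div_le_one (by linarith)).2 (by linarith)
      calc c * (((1+ε)^α)⁻¹ * ((1 - q n)/c)) * (1+δ)
          = (1 - q n) * ((1+δ)/(1+ε)^α) := by field_simp
        _ ≤ (1 - q n) * 1 := mul_le_mul_of_nonneg_left key h1q.le
        _ = 1 - q n := mul_one _
    linarith
  have hne : {y : ℝ | q n ≤ F y}.Nonempty := ⟨(1 + ε) * s, humem⟩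
  have hbdd : BddBelow {y : ℝ | q n ≤ F y} := ⟨b, hlow⟩
  exact ⟨le_csInf hne hlow, csInf_le hbdd humem⟩

end main

lemma quantile_ratio_tendsto (F : ℝ → ℝ) (α ρ c d : ℝ) (hF : ParetoTail F α ρ c d)
    (hmono : Monotone F) (q : ℕ → ℝ) (hq : ∀ n : ℕ, q n ∈ Set.Ioo (0 : ℝ) 1)
    (hq1 : Tendsto q atTop (nhds 1)) :
    Tendsto (fun n => sInf {y : ℝ | q n ≤ F y} / (c / (1 - q n)) ^ (1/α))
      atTop (nhds 1) := by
  have hα := hF.1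
  have hc := hF.2.2.1
  rw [Metric.tendsto_nhds]
  intro ε' hε'
  set ε : ℝ := min (ε'/2) (1/2) with hεdef
  have hεpos : 0 < ε := lt_min (by linarith) (by norm_num)
  have hε1 : ε < 1 := lt_of_le_of_lt (min_le_right _ _) (by norm_num)
  filter_upwards [quantile_bounds F α ρ c d hF hmono q hq hq1 hεpos hε1] with n hn
  have hspos : 0 < (c / (1 - q n)) ^ (1/α) :=
    Real.rpow_pos_of_pos (div_pos hc (sub_pos.2 (hq n).2)) _
  set s : ℝ := (c / (1 - q n)) ^ (1/α)
  have h1 : 1 - ε ≤ sInf {y : ℝ | q n ≤ F y} / s := (le_div_iff₀ hspos).2 (by linarith [hn.1])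
  have h2 : sInf {y : ℝ | q n ≤ F y} / s ≤ 1 + ε := (div_le_iff₀ hspos).2 (by linarith [hn.2])
  rw [Real.dist_eq, abs_lt]
  constructor
  · have : ε ≤ ε'/2 := min_le_left _ _
    linarith
  · have : ε ≤ ε'/2 := min_le_left _ _
    linarith

lemma extrap_ratio_tendsto (F : ℝ → ℝ) (α ρ c d : ℝ) (hF : ParetoTail F α ρ c d)
    (t q : ℕ → ℝ) (ht : Tendsto t atTop atTop)
    (hq : ∀ n : ℕ, q n ∈ Set.Ioo (0 : ℝ) 1) :
    Tendsto (fun n => t n * ((1 - F (t n)) / (1 - q n)) ^ (1/α) / (c / (1 - q n)) ^ (1/α))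
      atTop (nhds 1) := by
  obtain ⟨hα, hρ, hc, y₀, hy₀, e, he, hFeq⟩ := hF
  have hG := pareto_G_tendsto (d := d) hρ e he
  set G : ℝ → ℝ := fun y => 1 + d * y ^ (-ρ) + e y with hGdef
  have hGt : Tendsto (fun n => (G (t n)) ^ (1/α)) atTop (nhds 1) := by
    have := (hG.comp ht).rpow_const (p := 1/α) (Or.inl one_ne_zero)
    simpa using this
  apply hGt.congr'
  filter_upwards [ht.eventually_ge_atTop (max y₀ 1),
    (hG.comp ht).eventually (eventually_gt_nhds (by norm_num : (0:ℝ) < 1))] with n htn hGn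
  have htpos : 0 < t n := lt_of_lt_of_le (by norm_num) (le_trans (le_max_right y₀ 1) htn)
  have h1q : 0 < 1 - q n := sub_pos.2 (hq n).2
  have hspos : 0 < (c / (1 - q n)) ^ (1/α) := Real.rpow_pos_of_pos (div_pos hc h1q) _
  have heq : 1 - F (t n) = c * (t n) ^ (-α) * G (t n) :=
    hFeq (t n) (le_trans (le_max_left y₀ 1) htn)
  have hGpos : 0 < G (t n) := hGn
  rw [heq, show c * (t n) ^ (-α) * G (t n) / (1 - q n)
      = (c / (1 - q n)) * ((t n) ^ (-α) * G (t n)) by ring,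
    Real.mul_rpow (le_of_lt (div_pos hc h1q)) (by positivity),
    Real.mul_rpow (by positivity) hGpos.le,
    ← Real.rpow_mul htpos.le, show -α * (1/α) = -1 by field_simp,
    Real.rpow_neg_one]
  field_simp

lemma combined_ratio (F : ℝ → ℝ) (α ρ c d : ℝ) (hF : ParetoTail F α ρ c d)
    (hmono : Monotone F) (t q : ℕ → ℝ) (ht : Tendsto t atTop atTop)
    (hq : ∀ n : ℕ, q n ∈ Set.Ioo (0 : ℝ) 1) (hq1 : Tendsto q atTop (nhds 1)) :
    Tendsto (fun n => t n * ((1 - F (t n)) / (1 - q n)) ^ (1/α) / sInf {y : ℝ | q n ≤ F y})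
        atTop (nhds 1) ∧
      ∀ᶠ n in atTop, 0 < sInf {y : ℝ | q n ≤ F y} := by
  have hα := hF.1
  have hc := hF.2.2.1
  have hQ := quantile_ratio_tendsto F α ρ c d hF hmono q hq hq1
  have hE := extrap_ratio_tendsto F α ρ c d hF t q ht hq
  have hspos : ∀ n, 0 < (c / (1 - q n)) ^ (1/α) := fun n =>
    Real.rpow_pos_of_pos (div_pos hc (sub_pos.2 (hq n).2)) _
  have hQpos : ∀ᶠ n in atTop, 0 < sInf {y : ℝ | q n ≤ F y} := by
    filter_upwards [hQ.eventually (eventually_gt_nhds (by norm_num : (0:ℝ) < 1))] with n hn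
    have := mul_pos hn (hspos n)
    rwa [div_mul_cancel₀ _ (hspos n).ne'] at this
  refine ⟨?_, hQpos⟩
  have hdiv := hE.div hQ one_ne_zero
  rw [show (1:ℝ)/1 = 1 by norm_num] at hdiv
  apply hdiv.congr'
  filter_upwards [hQpos] with n hn
  field_simp
  have hs' := (hspos n).ne'
  have hn' := hn.ne'
  rw [Pi.div_apply]
  field_simp

/-- Relative consistency of the Pareto-extrapolated quantile treatment effect.
For `j ∈ {0,1}`, `F_j` is nondecreasing, right-continuous and satisfies the second-order
Pareto tail condition with parameters `(α_j, ρ_j, c_j, d_j)`, with quantile functions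
`Q_j q = inf {y | F_j y ≥ q}`. With thresholds `t_{j,n} → ∞` and quantile levels
`q n ∈ (0,1)`, `q n → 1`, the extrapolated quantiles
`Ŷ_{j,n} = t_{j,n} ((1 - F_j(t_{j,n}))/(1 - q n))^(1/α_j)` satisfy
`(Ŷ_{1,n} - Ŷ_{0,n} - (Q_1(q n) - Q_0(q n))) / max (Q_1(q n)) (Q_0(q n)) → 0`. -/
theorem statement14 (F₁ F₀ : ℝ → ℝ) (α₁ ρ₁ c₁ d₁ α₀ ρ₀ c₀ d₀ : ℝ)
    (hF₁ : ParetoTail F₁ α₁ ρ₁ c₁ d₁) (hF₀ : ParetoTail F₀ α₀ ρ₀ c₀ d₀)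
    (hmono₁ : Monotone F₁) (hrc₁ : ∀ x : ℝ, ContinuousWithinAt F₁ (Set.Ici x) x)
    (hmono₀ : Monotone F₀) (hrc₀ : ∀ x : ℝ, ContinuousWithinAt F₀ (Set.Ici x) x)
    (t₁ t₀ q : ℕ → ℝ) (ht₁ : Tendsto t₁ atTop atTop) (ht₀ : Tendsto t₀ atTop atTop)
    (hq : ∀ n : ℕ, q n ∈ Set.Ioo (0 : ℝ) 1) (hq1 : Tendsto q atTop (nhds 1)) :
    Tendsto (fun n : ℕ =>
        (t₁ n * ((1 - F₁ (t₁ n)) / (1 - q n)) ^ (1 / α₁)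
          - t₀ n * ((1 - F₀ (t₀ n)) / (1 - q n)) ^ (1 / α₀)
          - (sInf {y : ℝ | q n ≤ F₁ y} - sInf {y : ℝ | q n ≤ F₀ y}))
        / max (sInf {y : ℝ | q n ≤ F₁ y}) (sInf {y : ℝ | q n ≤ F₀ y}))
      atTop (nhds 0) := by
  obtain ⟨hR₁, hP₁⟩ := combined_ratio F₁ α₁ ρ₁ c₁ d₁ hF₁ hmono₁ t₁ q ht₁ hq hq1
  obtain ⟨hR₀, hP₀⟩ := combined_ratio F₀ α₀ ρ₀ c₀ d₀ hF₀ hmono₀ t₀ q ht₀ hq hq1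
  set E₁ : ℕ → ℝ := fun n => t₁ n * ((1 - F₁ (t₁ n)) / (1 - q n)) ^ (1 / α₁) with hE₁
  set E₀ : ℕ → ℝ := fun n => t₀ n * ((1 - F₀ (t₀ n)) / (1 - q n)) ^ (1 / α₀) with hE₀
  set Q₁ : ℕ → ℝ := fun n => sInf {y : ℝ | q n ≤ F₁ y} with hQ₁
  set Q₀ : ℕ → ℝ := fun n => sInf {y : ℝ | q n ≤ F₀ y} with hQ₀
  have hg : Tendsto (fun n => |E₁ n / Q₁ n - 1| + |E₀ n / Q₀ n - 1|) atTop (nhds 0) := by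
    have h := (hR₁.sub_const 1).abs.add (hR₀.sub_const 1).abs
    simp only [sub_self, abs_zero, add_zero] at h
    exact h
  apply squeeze_zero_norm' _ hg
  filter_upwards [hP₁, hP₀] with n h1 h0
  have hM : 0 < max (Q₁ n) (Q₀ n) := lt_of_lt_of_le h1 (le_max_left _ _)
  have f1 : |E₁ n / Q₁ n - 1| = |E₁ n - Q₁ n| / Q₁ n := by
    rw [show E₁ n / Q₁ n - 1 = (E₁ n - Q₁ n) / Q₁ n by
      have h1' : Q₁ n ≠ 0 := h1.ne'; rw [sub_div, div_self h1'], abs_div, abs_of_pos h1]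
  have f0 : |E₀ n / Q₀ n - 1| = |E₀ n - Q₀ n| / Q₀ n := by
    rw [show E₀ n / Q₀ n - 1 = (E₀ n - Q₀ n) / Q₀ n by
      have h0' : Q₀ n ≠ 0 := h0.ne'; rw [sub_div, div_self h0'], abs_div, abs_of_pos h0]
  calc ‖(E₁ n - E₀ n - (Q₁ n - Q₀ n)) / max (Q₁ n) (Q₀ n)‖
      = |(E₁ n - Q₁ n) - (E₀ n - Q₀ n)| / max (Q₁ n) (Q₀ n) := by
        rw [Real.norm_eq_abs, abs_div, abs_of_pos hM]
        congr 1
        congr 1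
        ring
    _ ≤ (|E₁ n - Q₁ n| + |E₀ n - Q₀ n|) / max (Q₁ n) (Q₀ n) := by
        gcongr
        exact abs_sub _ _
    _ = |E₁ n - Q₁ n| / max (Q₁ n) (Q₀ n) + |E₀ n - Q₀ n| / max (Q₁ n) (Q₀ n) := add_div _ _ _
    _ ≤ |E₁ n - Q₁ n| / Q₁ n + |E₀ n - Q₀ n| / Q₀ n := by
        gcongr
        · exact le_max_left _ _
        · exact le_max_right _ _
    _ = |E₁ n / Q₁ n - 1| + |E₀ n / Q₀ n - 1| := by rw [f1, f0]
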